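/- arXiv:1412.4057 — 2 statements merged into one kernel-verified Lean document; each statement's English description precedes it below -/
import Mathlib

section
/- For λ > 0 sufficiently large, the mountain-pass level satisfies c_a < (1/3) S^{3/2}, where S is the best Sobolev constant for the embedding D^{1,2}(ℝ³) ↪ L⁶(ℝ³). -/
noncomputable section

open MeasureTheory Real Set Filter Topology Metric

/-- Euclidean space `ℝ³`. -/
abbrev E3 : Type := EuclideanSpace ℝ (Fin 3)

/-- The (a.e. defined) gradient of a function `u : ℝ³ → ℝ`. -/
def grad (u : E3 → ℝ) (x : E3) : E3 := gradient u x

/-- The Newtonian (Poisson) potential `φ_u(x) = (1/4π) ∫ u(y)²/|x−y| dy`. -/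
def phiFun (u : E3 → ℝ) (x : E3) : ℝ :=
  (1 / (4 * π)) * ∫ y : E3, (u y) ^ 2 / ‖x - y‖

/-- Positive part `u⁺`. -/
def uplus (u : E3 → ℝ) (x : E3) : ℝ := max (u x) 0

/-- Membership in `H¹(ℝ³)` (differentiable representative with `u, ∇u ∈ L²`). -/
def MemH1 (u : E3 → ℝ) : Prop :=
  Differentiable ℝ u ∧ MemLp u 2 (volume : Measure E3) ∧
    MemLp (grad u) 2 (volume : Measure E3)

/-- Squared `H¹` norm: `∫|∇u|² + ∫u²`. -/
def H1normSq (u : E3 → ℝ) : ℝ :=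
  (∫ x : E3, ‖grad u x‖ ^ 2) + ∫ x : E3, (u x) ^ 2

/-- `H¹` norm. -/
def H1norm (u : E3 → ℝ) : ℝ := Real.sqrt (H1normSq u)

/-- `H¹` distance. -/
def H1dist (u v : E3 → ℝ) : ℝ := H1norm (u - v)

/-- The limiting energy functional `I_a`. -/
def Ia (a lam p : ℝ) (u : E3 → ℝ) : ℝ :=
  (1 / 2) * (∫ x : E3, ‖grad u x‖ ^ 2)
    + (a / 2) * (∫ x : E3, (u x) ^ 2)
    + (1 / 4) * (∫ x : E3, phiFun u x * (u x) ^ 2)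
    - (lam / p) * (∫ x : E3, uplus u x ^ p)
    - (1 / 6) * (∫ x : E3, uplus u x ^ 6)

/-- The functional `G_a = 2⟨I_a′(u),u⟩ − P_a(u)`. -/
def Ga (a lam p : ℝ) (u : E3 → ℝ) : ℝ :=
  (3 / 2) * (∫ x : E3, ‖grad u x‖ ^ 2)
    + (a / 2) * (∫ x : E3, (u x) ^ 2)
    + (3 / 4) * (∫ x : E3, phiFun u x * (u x) ^ 2)
    - ((2 * p - 3) / p) * lam * (∫ x : E3, uplus u x ^ p)
    - (3 / 2) * (∫ x : E3, uplus u x ^ 6)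

/-- The manifold `M_a = {u ∈ H¹ \ {0} : G_a(u) = 0}`. -/
def Ma (a lam p : ℝ) : Set (E3 → ℝ) :=
  {u | MemH1 u ∧ u ≠ 0 ∧ Ga a lam p u = 0}

/-- The scaling `u_t(x) = t² u(tx)`. -/
def scale (t : ℝ) (u : E3 → ℝ) : E3 → ℝ := fun x => t ^ 2 * u (t • x)

/-- The Fréchet derivative pairing `⟨I_a′(u), v⟩`. -/
def IaDeriv (a lam p : ℝ) (u v : E3 → ℝ) : ℝ :=
  (∫ x : E3, (inner ℝ (grad u x) (grad v x) : ℝ))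
    + a * (∫ x : E3, u x * v x)
    + (∫ x : E3, phiFun u x * u x * v x)
    - lam * (∫ x : E3, uplus u x ^ (p - 1) * v x)
    - (∫ x : E3, uplus u x ^ 5 * v x)

/-- Continuity of a path `γ : [0,1] → H¹(ℝ³)` w.r.t. the `H¹` distance. -/
def PathCts (γ : ℝ → E3 → ℝ) : Prop :=
  ∀ s ∈ Icc (0:ℝ) 1, ∀ ε > (0:ℝ), ∃ δ > (0:ℝ),
    ∀ t ∈ Icc (0:ℝ) 1, |t - s| < δ → H1dist (γ t) (γ s) < ε

/-- The admissible mountain-pass paths `Γ_a`. -/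
def GammaA (a lam p : ℝ) : Set (ℝ → E3 → ℝ) :=
  {γ | PathCts γ ∧ (∀ t ∈ Icc (0:ℝ) 1, MemH1 (γ t)) ∧ γ 0 = 0 ∧ Ia a lam p (γ 1) < 0}

/-- The mountain-pass level `c_a`. -/
def ca (a lam p : ℝ) : ℝ :=
  sInf ((fun γ => sSup ((fun t => Ia a lam p (γ t)) '' Icc (0:ℝ) 1)) '' GammaA a lam p)

/-- `⟨I_a′(u_n), ·⟩ → 0` in the dual of `H¹`. -/
def DerivTendstoZero (a lam p : ℝ) (u : ℕ → E3 → ℝ) : Prop :=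
  ∃ err : ℕ → ℝ, Tendsto err atTop (𝓝 0) ∧
    ∀ n, ∀ v : E3 → ℝ, MemH1 v → |IaDeriv a lam p (u n) v| ≤ err n * H1norm v

/-- Critical point of `I_a` on `H¹(ℝ³)`. -/
def IsCritA (a lam p : ℝ) (u : E3 → ℝ) : Prop :=
  ∀ v : E3 → ℝ, MemH1 v → IaDeriv a lam p u v = 0

/-- Best Sobolev constant for `D^{1,2}(ℝ³) ↪ L⁶(ℝ³)`. -/
def SobolevS : ℝ :=
  sInf {s | ∃ u : E3 → ℝ, Differentiable ℝ u ∧ MemLp u 6 (volume : Measure E3) ∧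
    MemLp (grad u) 2 (volume : Measure E3) ∧ (∫ x : E3, |u x| ^ 6) = 1 ∧
    s = ∫ x : E3, ‖grad u x‖ ^ 2}

/-- The set `S_a` of ground states `U` of the limiting problem with `U(0) = max U`. -/
def SaSet (a lam p : ℝ) : Set (E3 → ℝ) :=
  {U | MemH1 U ∧ (∀ x, 0 < U x) ∧ IsCritA a lam p U ∧ Ia a lam p U = ca a lam p ∧
    ∀ x, U x ≤ U 0}


open scoped ENNReal NNReal

-- grad of scalar multiple
lemma grad_const_mul (u : E3 → ℝ) (hu : Differentiable ℝ u) (t : ℝ) :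
    grad (fun x => t * u x) = fun x => t • grad u x := by
  funext x
  show gradient (fun x => t * u x) x = t • gradient u x
  unfold gradient
  rw [fderiv_const_mul (hu x) t, _root_.map_smul]

lemma grad_zero_fn : grad (0 : E3 → ℝ) = 0 := by
  funext x
  show gradient (0 : E3 → ℝ) x = 0
  unfold gradient
  rw [show (0 : E3 → ℝ) = (fun _ => (0:ℝ)) from rfl, fderiv_fun_const]
  simp

lemma Ia_zero (a lam p : ℝ) (hp : p ≠ 0) : Ia a lam p 0 = 0 := by
  have h1 : ∀ x : E3, (0 : E3 → ℝ) x = 0 := fun _ => rfl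
  have hup : ∀ x : E3, uplus (0 : E3 → ℝ) x = 0 := by
    intro x; simp [uplus, h1]
  have hphi : ∀ x : E3, phiFun (0 : E3 → ℝ) x = 0 := by
    intro x; simp [phiFun, h1]
  simp [Ia, grad_zero_fn, h1, hup, hphi, Real.zero_rpow hp]

lemma phiFun_nonneg (u : E3 → ℝ) (x : E3) : 0 ≤ phiFun u x := by
  unfold phiFun
  apply mul_nonneg
  · positivity
  · apply integral_nonneg
    intro y
    positivity

lemma phiFun_const_mul (u : E3 → ℝ) (t : ℝ) (z : E3) :
    phiFun (fun x => t * u x) z = t ^ 2 * phiFun u z := by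
  unfold phiFun
  rw [show (∫ y : E3, (t * u y) ^ 2 / ‖z - y‖) = ∫ y : E3, t ^ 2 * ((u y) ^ 2 / ‖z - y‖) by
    congr 1; funext y; ring, integral_const_mul]
  ring

lemma uplus_const_mul (u : E3 → ℝ) {t : ℝ} (ht : 0 ≤ t) (x : E3) :
    uplus (fun x => t * u x) x = t * uplus u x := by
  unfold uplus
  rw [mul_max_of_nonneg _ _ ht, mul_zero]

lemma Ia_scale (a lam p : ℝ) (hp : 0 < p) (u : E3 → ℝ) (hu : Differentiable ℝ u)
    {t : ℝ} (ht : 0 ≤ t) :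
    Ia a lam p (fun x => t * u x)
      = (1/2) * t^2 * (∫ x : E3, ‖grad u x‖ ^ 2)
        + (a/2) * t^2 * (∫ x : E3, (u x) ^ 2)
        + (1/4) * t^4 * (∫ x : E3, phiFun u x * (u x) ^ 2)
        - (lam/p) * (t ^ p * (∫ x : E3, uplus u x ^ p))
        - (1/6) * (t^6 * (∫ x : E3, uplus u x ^ 6)) := by
  unfold Ia
  rw [grad_const_mul u hu t]
  rw [show (∫ x : E3, ‖t • grad u x‖ ^ 2) = ∫ x : E3, t^2 * ‖grad u x‖ ^ 2 by
    congr 1; funext x; rw [norm_smul]; simp [mul_pow, sq_abs], integral_const_mul]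
  rw [show (∫ x : E3, ((fun x => t * u x) x) ^ 2) = ∫ x : E3, t^2 * (u x) ^ 2 by
    congr 1; funext x; ring, integral_const_mul]
  rw [show (∫ x : E3, phiFun (fun x => t * u x) x * ((fun x => t * u x) x) ^ 2)
      = ∫ x : E3, t^4 * (phiFun u x * (u x) ^ 2) by
    congr 1; funext x; rw [phiFun_const_mul]; ring, integral_const_mul]
  rw [show (∫ x : E3, uplus (fun x => t * u x) x ^ p) = ∫ x : E3, t ^ p * (uplus u x ^ p) by
    congr 1; funext x
    rw [uplus_const_mul u ht]
    exact Real.mul_rpow ht (le_max_right _ _), integral_const_mul]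
  rw [show (∫ x : E3, uplus (fun x => t * u x) x ^ 6) = ∫ x : E3, t ^ 6 * (uplus u x ^ 6) by
    congr 1; funext x; rw [uplus_const_mul u ht, mul_pow], integral_const_mul]
  ring

lemma H1dist_scale (u : E3 → ℝ) (hu : Differentiable ℝ u) (t s : ℝ) :
    H1dist (fun x => t * u x) (fun x => s * u x) = |t - s| * Real.sqrt (H1normSq u) := by
  unfold H1dist H1norm
  have h : (fun x => t * u x) - (fun x => s * u x) = fun x => (t - s) * u x := by
    funext x; simp [Pi.sub_apply]; ring
  rw [h]
  unfold H1normSq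
  rw [grad_const_mul u hu (t - s)]
  rw [show (∫ x : E3, ‖(t - s) • grad u x‖ ^ 2) = ∫ x : E3, (t-s)^2 * ‖grad u x‖ ^ 2 by
    congr 1; funext x; rw [norm_smul]; simp [mul_pow, sq_abs], integral_const_mul]
  rw [show (∫ x : E3, ((t - s) * u x) ^ 2) = ∫ x : E3, (t-s)^2 * (u x) ^ 2 by
    congr 1; funext x; ring, integral_const_mul]
  rw [← mul_add, Real.sqrt_mul (sq_nonneg _), Real.sqrt_sq_eq_abs]

lemma memH1_const_mul (u : E3 → ℝ) (hu : MemH1 u) (t : ℝ) : MemH1 (fun x => t * u x) := by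
  obtain ⟨h1, h2, h3⟩ := hu
  refine ⟨h1.const_mul t, h2.const_mul t, ?_⟩
  rw [grad_const_mul u h1 t]
  exact h3.const_smul t

-- The fixed bump function
def bmp : ContDiffBump (0 : E3) := ⟨1, 2, one_pos, one_lt_two⟩
def u₀ : E3 → ℝ := fun x => bmp x

lemma u₀_cont : Continuous u₀ := bmp.continuous
lemma u₀_diff : Differentiable ℝ u₀ := (bmp.contDiff (n := 1)).differentiable one_ne_zero
lemma u₀_nonneg (x : E3) : 0 ≤ u₀ x := bmp.nonneg
lemma u₀_cs : HasCompactSupport u₀ := bmp.hasCompactSupport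
lemma u₀_one {x : E3} (hx : x ∈ ball (0:E3) 1) : u₀ x = 1 :=
  bmp.one_of_mem_closedBall (ball_subset_closedBall hx)

lemma uplus_u₀ : uplus u₀ = u₀ := by
  funext x; exact max_eq_left (u₀_nonneg x)

lemma grad_u₀_cont : Continuous (grad u₀) := by
  unfold grad gradient
  exact (LinearIsometryEquiv.continuous _).comp ((bmp.contDiff (n := 1)).continuous_fderiv one_ne_zero)

lemma grad_u₀_cs : HasCompactSupport (grad u₀) := by
  have h := u₀_cs.fderiv (𝕜 := ℝ)
  have : grad u₀ = (fun L : E3 →L[ℝ] ℝ => (InnerProductSpace.toDual ℝ E3).symm L) ∘ fderiv ℝ u₀ :=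
    rfl
  rw [this]
  exact h.comp_left (by simp)

lemma u₀_memℒp (q : ENNReal) : MemLp u₀ q (volume : Measure E3) :=
  u₀_cont.memLp_of_hasCompactSupport u₀_cs

lemma grad_u₀_memℒp : MemLp (grad u₀) 2 (volume : Measure E3) :=
  grad_u₀_cont.memLp_of_hasCompactSupport grad_u₀_cs

lemma memH1_u₀ : MemH1 u₀ := ⟨u₀_diff, u₀_memℒp 2, grad_u₀_memℒp⟩

-- positivity of integrals of powers of the bump
lemma bump_pow_pos (g : E3 → ℝ) (hg : Continuous g) (hnn : ∀ x, 0 ≤ g x)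
    (hone : ∀ x ∈ ball (0:E3) 1, g x = 1) (hcs : HasCompactSupport g) :
    0 < ∫ x : E3, g x := by
  have hint : Integrable g (volume : Measure E3) := hg.integrable_of_hasCompactSupport hcs
  have h1 : ∫ x in ball (0:E3) 1, g x ≤ ∫ x : E3, g x :=
    setIntegral_le_integral hint (Filter.Eventually.of_forall hnn)
  have h2 : ∫ x in ball (0:E3) 1, g x = ∫ _x in ball (0:E3) 1, (1:ℝ) := by
    apply setIntegral_congr_fun measurableSet_ball
    intro x hx; exact hone x hx
  have h3 : (∫ _x in ball (0:E3) 1, (1:ℝ)) = (volume (ball (0:E3) 1)).toReal := by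
    simp [Measure.real]
  have h4 : 0 < (volume (ball (0:E3) 1)).toReal := by
    apply ENNReal.toReal_pos
    · exact (measure_ball_pos volume (0:E3) one_pos).ne'
    · exact (measure_ball_lt_top).ne
  rw [h2, h3] at h1
  linarith

lemma int_u₀_rpow_pos {q : ℝ} (hq : 0 < q) : 0 < ∫ x : E3, u₀ x ^ q := by
  apply bump_pow_pos
  · apply Continuous.rpow_const u₀_cont
    intro x; right; exact hq.le
  · intro x; exact Real.rpow_nonneg (u₀_nonneg x) q
  · intro x hx; rw [u₀_one hx, Real.one_rpow]
  · apply u₀_cs.comp_left (g := fun s : ℝ => s ^ q)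
    exact Real.zero_rpow hq.ne'
lemma int_u₀_pow6_pos : 0 < ∫ x : E3, u₀ x ^ (6:ℕ) := by
  apply bump_pow_pos
  · exact u₀_cont.pow 6
  · intro x; positivity
  · intro x hx; rw [u₀_one hx]; norm_num
  · apply u₀_cs.comp_left (g := fun s : ℝ => s ^ (6:ℕ)); norm_num

def es : (Fin 3 → ℝ) → E3 := ⇑(MeasurableEquiv.toLp 2 (Fin 3 → ℝ))

lemma line_bound (u : E3 → ℝ) (hu : Differentiable ℝ u) (y : Fin 3 → ℝ) (i : Fin 3) :
    ENNReal.ofReal ((u (es y))^4)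
      ≤ 2 * ∫⁻ t : ℝ, ENNReal.ofReal ((1/4) * (u (es (Function.update y i t)))^6
          + 4 * ‖grad u (es (Function.update y i t))‖^2) := by
  classical
  set ei : E3 := EuclideanSpace.single i (1:ℝ) with hei
  set ℓ : ℝ → E3 := fun t => es (Function.update y i t) with hℓdef
  set F : ℝ → ℝ := fun t => (1/4) * (u (ℓ t))^6 + 4 * ‖grad u (ℓ t)‖^2 with hFdef
  show ENNReal.ofReal ((u (es y))^4) ≤ 2 * ∫⁻ t : ℝ, ENNReal.ofReal (F t)
  have hℓy : ℓ (y i) = es y := congrArg es (Function.update_eq_self i y)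
  have hℓ : ∀ t, ℓ t = ℓ 0 + t • ei := by
    intro t; ext j
    rw [PiLp.add_apply, PiLp.smul_apply]
    show Function.update y i t j = Function.update y i 0 j + t * ei j
    rcases eq_or_ne j i with rfl | hj
    · simp [Function.update_self, hei, EuclideanSpace.single_apply]
    · simp [Function.update_of_ne hj, hei, EuclideanSpace.single_apply, hj]
  have hℓd : ∀ t, HasDerivAt ℓ ei t := by
    intro t
    rw [funext hℓ]
    simpa using ((hasDerivAt_id t).smul_const ei).const_add (ℓ 0)
  have hℓc : Continuous ℓ := by
    rw [funext hℓ]; fun_prop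
  have hφd : ∀ t, HasDerivAt (fun s => u (ℓ s)) (fderiv ℝ u (ℓ t) ei) t := fun t =>
    (hu (ℓ t)).hasFDerivAt.comp_hasDerivAt t (hℓd t)
  set D : ℝ → ℝ := fun t => 4 * (u (ℓ t)) ^ 3 * (fderiv ℝ u (ℓ t) ei) with hD
  have hhd : ∀ t, HasDerivAt (fun s => (u (ℓ s))^4) (D t) t := by
    intro t
    have := (hφd t).pow 4
    norm_num at this
    exact this
  have hgradnorm : ∀ z : E3, ‖grad u z‖ = ‖fderiv ℝ u z‖ := by
    intro z
    show ‖(InnerProductSpace.toDual ℝ E3).symm (fderiv ℝ u z)‖ = _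
    exact LinearIsometryEquiv.norm_map _ _
  have hDb : ∀ t, |D t| ≤ 2 * F t := by
    intro t
    have h1 : |fderiv ℝ u (ℓ t) ei| ≤ ‖grad u (ℓ t)‖ := by
      rw [hgradnorm]
      calc |fderiv ℝ u (ℓ t) ei| = ‖fderiv ℝ u (ℓ t) ei‖ := (Real.norm_eq_abs _).symm
        _ ≤ ‖fderiv ℝ u (ℓ t)‖ * ‖ei‖ := (fderiv ℝ u (ℓ t)).le_opNorm ei
        _ = ‖fderiv ℝ u (ℓ t)‖ := by
            rw [hei, EuclideanSpace.norm_single]; simp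
    have h2 : |D t| = 4 * |u (ℓ t)|^3 * |fderiv ℝ u (ℓ t) ei| := by
      rw [hD, abs_mul, abs_mul, abs_pow]
      norm_num
    have h3 : (u (ℓ t))^6 = |u (ℓ t)|^6 := ((Even.pow_abs ⟨3, by norm_num⟩ _)).symm
    rw [h2, hFdef]
    simp only
    rw [h3]
    nlinarith [sq_nonneg (|u (ℓ t)|^3 - 4*|fderiv ℝ u (ℓ t) ei|), abs_nonneg (fderiv ℝ u (ℓ t) ei),
      abs_nonneg (u (ℓ t)), norm_nonneg (grad u (ℓ t)),
      pow_le_pow_left₀ (abs_nonneg (fderiv ℝ u (ℓ t) ei)) h1 2]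
  have hFnn : ∀ t, 0 ≤ F t := by
    intro t; rw [hFdef]; simp only; positivity
  set K := ∫⁻ t : ℝ, ENNReal.ofReal (F t) with hK
  rcases eq_or_ne K ⊤ with htop | hKlt
  · rw [htop]
    simp [ENNReal.mul_top]
  -- measurability
  have mgrad : Measurable (fun z : E3 => grad u z) := by
    have : (fun z : E3 => grad u z)
        = (fun L : E3 →L[ℝ] ℝ => (InnerProductSpace.toDual ℝ E3).symm L) ∘ fderiv ℝ u := rfl
    rw [this]
    exact (LinearIsometryEquiv.continuous _).measurable.comp (measurable_fderiv ℝ u)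
  have mF : Measurable F := by
    apply Measurable.add
    · exact (((hu.continuous.comp hℓc).measurable.pow_const 6).const_mul _)
    · exact ((((mgrad.comp hℓc.measurable).norm).pow_const 2).const_mul _)
  have mD : Measurable D := by
    have h1 : Measurable fun t => fderiv ℝ u (ℓ t) ei :=
      (measurable_fderiv_apply_const (𝕜 := ℝ) (f := u) ei).comp hℓc.measurable
    exact (((hu.continuous.comp hℓc).measurable.pow_const 3).const_mul 4).mul h1
  have h2K : ∫⁻ t : ℝ, ENNReal.ofReal (2 * F t) = 2 * K := by
    rw [hK]
    rw [← lintegral_const_mul' 2 _ (by norm_num)]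
    congr 1; funext t
    rw [ENNReal.ofReal_mul (by norm_num : (0:ℝ) ≤ 2)]
    norm_num
  have hDi : Integrable D (volume : Measure ℝ) := by
    refine ⟨mD.aestronglyMeasurable, ?_⟩
    rw [hasFiniteIntegral_iff_norm]
    calc ∫⁻ t, ENNReal.ofReal ‖D t‖ ≤ ∫⁻ t, ENNReal.ofReal (2 * F t) := by
          apply lintegral_mono
          intro t
          exact ENNReal.ofReal_le_ofReal (by rw [Real.norm_eq_abs]; exact hDb t)
      _ = 2 * K := h2K
      _ < ⊤ := by
          rw [ENNReal.mul_lt_top_iff]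
          left
          exact ⟨by norm_num, lt_top_iff_ne_top.2 hKlt⟩
  -- main estimate
  have main : ∀ δ > (0:ℝ), (u (es y))^4 ≤ (∫ t : ℝ, |D t|) + δ := by
    intro δ hδ
    have hex : ∃ a, a < y i ∧ (u (ℓ a))^4 < δ := by
      by_contra hno
      push_neg at hno
      set c := (1/4) * (Real.sqrt δ)^3 with hc
      have hcpos : 0 < c := by
        have := Real.sqrt_pos.2 hδ
        positivity
      have hFc : ∀ a ∈ Iio (y i), c ≤ F a := by
        intro a ha
        have hδa := hno a ha
        have hw : Real.sqrt δ ≤ (u (ℓ a))^2 := by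
          have h2 : δ ≤ ((u (ℓ a))^2)^2 := by nlinarith
          calc Real.sqrt δ ≤ Real.sqrt (((u (ℓ a))^2)^2) := Real.sqrt_le_sqrt h2
            _ = (u (ℓ a))^2 := Real.sqrt_sq (sq_nonneg _)
        have h6 : (Real.sqrt δ)^3 ≤ (u (ℓ a))^6 := by
          calc (Real.sqrt δ)^3 ≤ ((u (ℓ a))^2)^3 :=
              pow_le_pow_left₀ (Real.sqrt_nonneg δ) hw 3
            _ = (u (ℓ a))^6 := by ring
        rw [hFdef]; simp only
        nlinarith [norm_nonneg (grad u (ℓ a))]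
      have hKtop : K = ⊤ := by
        have h1 : ∫⁻ t in Iio (y i), ENNReal.ofReal c ≤ ∫⁻ t in Iio (y i), ENNReal.ofReal (F t) :=
          setLIntegral_mono mF.ennreal_ofReal fun t ht => ENNReal.ofReal_le_ofReal (hFc t ht)
        have h2 : ∫⁻ _t in Iio (y i), ENNReal.ofReal c = ⊤ := by
          rw [setLIntegral_const, Real.volume_Iio, ENNReal.mul_top]
          simpa using hcpos
        have h3 : (⊤:ENNReal) ≤ K := by
          rw [← h2]
          exact h1.trans (setLIntegral_le_lintegral _ _)
        exact top_le_iff.1 h3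
      exact hKlt hKtop
    obtain ⟨a, ha, hua⟩ := hex
    have hftc : ∫ t in a..(y i), D t = (u (ℓ (y i)))^4 - (u (ℓ a))^4 :=
      intervalIntegral.integral_eq_sub_of_hasDerivAt (fun t _ => hhd t)
        (hDi.intervalIntegrable)
    have habs : |∫ t in a..(y i), D t| ≤ ∫ t : ℝ, |D t| := by
      calc |∫ t in a..(y i), D t| ≤ ∫ t in a..(y i), |D t| :=
            intervalIntegral.abs_integral_le_integral_abs ha.le
        _ = ∫ t in Set.Ioc a (y i), |D t| := intervalIntegral.integral_of_le ha.le
        _ ≤ ∫ t : ℝ, |D t| :=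
            setIntegral_le_integral hDi.abs (Filter.Eventually.of_forall fun t => abs_nonneg _)
    rw [hℓy] at hftc
    have := abs_le.1 habs
    linarith [this.1, this.2]
  have hfin : (u (es y))^4 ≤ ∫ t : ℝ, |D t| := by
    apply le_of_forall_pos_le_add
    intro δ hδ
    exact main δ hδ
  calc ENNReal.ofReal ((u (es y))^4) ≤ ENNReal.ofReal (∫ t : ℝ, |D t|) :=
        ENNReal.ofReal_le_ofReal hfin
    _ = ∫⁻ t, ENNReal.ofReal |D t| :=
        ofReal_integral_eq_lintegral_ofReal hDi.abs (Filter.Eventually.of_forall fun t => abs_nonneg _)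
    _ ≤ ∫⁻ t, ENNReal.ofReal (2 * F t) :=
        lintegral_mono fun t => ENNReal.ofReal_le_ofReal (hDb t)
    _ = 2 * K := h2K

lemma sobolev_lb (u : E3 → ℝ) (hud : Differentiable ℝ u)
    (hu6 : MemLp u 6 (volume : Measure E3))
    (hg2 : MemLp (grad u) 2 (volume : Measure E3))
    (hnorm : (∫ x : E3, |u x| ^ (6:ℕ)) = 1) :
    1/16 ≤ ∫ x : E3, ‖grad u x‖ ^ 2 := by
  classical
  set s := ∫ x : E3, ‖grad u x‖ ^ 2 with hsdef
  have hs0 : 0 ≤ s := integral_nonneg fun x => by positivity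
  by_contra hcon
  push_neg at hcon
  -- integrability
  have int6 : Integrable (fun x : E3 => (u x)^(6:ℕ)) (volume : Measure E3) := by
    have h := hu6.integrable_norm_rpow (by norm_num) (by norm_num)
    have he : (fun x : E3 => ‖u x‖ ^ (6:ℝ≥0∞).toReal) = fun x : E3 => (u x)^(6:ℕ) := by
      funext x
      rw [show (6:ℝ≥0∞).toReal = ((6:ℕ):ℝ) by simp, Real.rpow_natCast, Real.norm_eq_abs,
        Even.pow_abs ⟨3, by norm_num⟩]
    rwa [he] at h
  have int2 : Integrable (fun x : E3 => ‖grad u x‖ ^ (2:ℕ)) (volume : Measure E3) := by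
    have h := hg2.integrable_norm_rpow (by norm_num) (by norm_num)
    have he : (fun x : E3 => ‖grad u x‖ ^ (2:ℝ≥0∞).toReal) = fun x : E3 => ‖grad u x‖^(2:ℕ) := by
      funext x
      rw [show (2:ℝ≥0∞).toReal = ((2:ℕ):ℝ) by simp, Real.rpow_natCast]
    rwa [he] at h
  set f : E3 → ℝ := fun z => (1/4) * (u z)^6 + 4 * ‖grad u z‖^2 with hfdef
  have hfnn : ∀ z, 0 ≤ f z := fun z => by rw [hfdef]; positivity
  have intf : Integrable f (volume : Measure E3) := (int6.const_mul _).add (int2.const_mul _)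
  have hintf : ∫ z : E3, f z = 1/4 + 4 * s := by
    rw [hfdef]
    rw [integral_add (int6.const_mul _) (int2.const_mul _), integral_const_mul, integral_const_mul]
    have hu61 : ∫ x : E3, (u x)^(6:ℕ) = 1 := by
      rw [← hnorm]; congr 1; funext x; rw [Even.pow_abs ⟨3, by norm_num⟩]
    rw [hu61, ← hsdef]
    ring
  -- measurability
  have mgrad : Measurable (fun z : E3 => grad u z) := by
    have : (fun z : E3 => grad u z)
        = (fun L : E3 →L[ℝ] ℝ => (InnerProductSpace.toDual ℝ E3).symm L) ∘ fderiv ℝ u := rfl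
    rw [this]
    exact (LinearIsometryEquiv.continuous _).measurable.comp (measurable_fderiv ℝ u)
  have mf : Measurable f := by
    apply Measurable.add
    · exact ((hud.continuous.measurable.pow_const 6).const_mul _)
    · exact (((mgrad.norm).pow_const 2).const_mul _)
  have mes : Measurable es := (MeasurableEquiv.toLp 2 (Fin 3 → ℝ)).measurable
  set Ff : (Fin 3 → ℝ) → ℝ≥0∞ := fun y => ENNReal.ofReal (f (es y)) with hFf
  have mFf : Measurable Ff := (mf.comp mes).ennreal_ofReal
  have hmp : MeasurePreserving es (volume : Measure (Fin 3 → ℝ)) (volume : Measure E3) :=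
    (EuclideanSpace.volume_preserving_symm_measurableEquiv_toLp (Fin 3)).symm
  -- LHS equals 1
  have eq1 : ∫⁻ z : E3, ENNReal.ofReal ((u z)^(6:ℕ)) = 1 := by
    rw [← ofReal_integral_eq_lintegral_ofReal int6
      (Filter.Eventually.of_forall fun x => Even.pow_nonneg ⟨3, by norm_num⟩ (u x))]
    rw [show ∫ x : E3, (u x)^(6:ℕ) = 1 by
      rw [← hnorm]; congr 1; funext x; rw [Even.pow_abs ⟨3, by norm_num⟩]]
    simp
  have eq2 : ∫⁻ y : Fin 3 → ℝ, ENNReal.ofReal ((u (es y))^(6:ℕ)) = 1 := by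
    rw [hmp.lintegral_comp (hud.continuous.measurable.pow_const 6).ennreal_ofReal]
    exact eq1
  -- cardinality facts
  have hcard : (Fintype.card (Fin 3) : ℝ) = 3 := by simp
  have hp : Real.HolderConjugate (Fintype.card (Fin 3)) ((3:ℝ)/2) := by
    constructor
    · rw [hcard]; norm_num
    · rw [hcard]; norm_num
    · norm_num
  -- pointwise bound
  have hpt : ∀ y : Fin 3 → ℝ, ENNReal.ofReal ((u (es y))^(6:ℕ))
      ≤ (2:ℝ≥0∞)^((3:ℝ)/2) * ∏ i : Fin 3,
          (∫⁻ t : ℝ, Ff (Function.update y i t)) ^ ((1:ℝ)/((Fintype.card (Fin 3):ℝ) - 1)) := by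
    intro y
    have hexp : ((1:ℝ)/((Fintype.card (Fin 3):ℝ) - 1)) = 1/2 := by rw [hcard]; norm_num
    rw [hexp]
    have h64 : ENNReal.ofReal ((u (es y))^(6:ℕ))
        = (ENNReal.ofReal ((u (es y))^(4:ℕ))) ^ ((3:ℝ)/2) := by
      rw [ENNReal.ofReal_rpow_of_nonneg (Even.pow_nonneg ⟨2, by norm_num⟩ _) (by norm_num)]
      congr 1
      rw [show (u (es y))^(4:ℕ) = |u (es y)|^(4:ℕ) from (Even.pow_abs ⟨2, by norm_num⟩ _).symm,
        show (u (es y))^(6:ℕ) = |u (es y)|^(6:ℕ) from (Even.pow_abs ⟨3, by norm_num⟩ _).symm]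
      rw [← Real.rpow_natCast |u (es y)| 4, ← Real.rpow_natCast |u (es y)| 6,
        ← Real.rpow_mul (abs_nonneg _)]
      norm_num
    rw [h64]
    have hprod : (ENNReal.ofReal ((u (es y))^(4:ℕ))) ^ ((3:ℝ)/2)
        = ∏ _i : Fin 3, (ENNReal.ofReal ((u (es y))^(4:ℕ))) ^ ((1:ℝ)/2) := by
      rw [Finset.prod_const]
      simp only [Finset.card_univ, Fintype.card_fin]
      rw [← ENNReal.rpow_natCast (ENNReal.ofReal ((u (es y))^(4:ℕ)) ^ ((1:ℝ)/2)) 3,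
        ← ENNReal.rpow_mul]
      norm_num
    rw [hprod]
    have hfac : ∀ i : Fin 3, (ENNReal.ofReal ((u (es y))^(4:ℕ))) ^ ((1:ℝ)/2)
        ≤ (2 * ∫⁻ t : ℝ, Ff (Function.update y i t)) ^ ((1:ℝ)/2) := by
      intro i
      apply ENNReal.rpow_le_rpow _ (by norm_num)
      exact line_bound u hud y i
    calc ∏ _i : Fin 3, (ENNReal.ofReal ((u (es y))^(4:ℕ))) ^ ((1:ℝ)/2)
        ≤ ∏ i : Fin 3, (2 * ∫⁻ t : ℝ, Ff (Function.update y i t)) ^ ((1:ℝ)/2) :=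
          Finset.prod_le_prod' fun i _ => hfac i
      _ = (2:ℝ≥0∞)^((3:ℝ)/2) * ∏ i : Fin 3, (∫⁻ t : ℝ, Ff (Function.update y i t)) ^ ((1:ℝ)/2) := by
          rw [show (∏ i : Fin 3, (2 * ∫⁻ t : ℝ, Ff (Function.update y i t)) ^ ((1:ℝ)/2))
              = ∏ i : Fin 3, ((2:ℝ≥0∞)^((1:ℝ)/2)
                  * (∫⁻ t : ℝ, Ff (Function.update y i t)) ^ ((1:ℝ)/2)) by
            congr 1; funext i; rw [ENNReal.mul_rpow_of_nonneg _ _ (by norm_num)]]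
          rw [Finset.prod_mul_distrib, Finset.prod_const]
          simp only [Finset.card_univ, Fintype.card_fin]
          congr 1
          rw [← ENNReal.rpow_natCast ((2:ℝ≥0∞) ^ ((1:ℝ)/2)) 3, ← ENNReal.rpow_mul]
          norm_num
  -- apply grid-lines lemma
  have hgl := MeasureTheory.lintegral_prod_lintegral_pow_le
      (fun _ : Fin 3 => (volume : Measure ℝ)) hp mFf
  rw [← MeasureTheory.volume_pi] at hgl
  have main : (1:ℝ≥0∞) ≤ (2:ℝ≥0∞)^((3:ℝ)/2) * (∫⁻ y : Fin 3 → ℝ, Ff y) ^ ((3:ℝ)/2) := by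
    calc (1:ℝ≥0∞) = ∫⁻ y : Fin 3 → ℝ, ENNReal.ofReal ((u (es y))^(6:ℕ)) := eq2.symm
      _ ≤ ∫⁻ y : Fin 3 → ℝ, (2:ℝ≥0∞)^((3:ℝ)/2) * ∏ i : Fin 3,
            (∫⁻ t : ℝ, Ff (Function.update y i t)) ^ ((1:ℝ)/((Fintype.card (Fin 3):ℝ) - 1)) :=
          lintegral_mono hpt
      _ = (2:ℝ≥0∞)^((3:ℝ)/2) * ∫⁻ y : Fin 3 → ℝ, ∏ i : Fin 3,
            (∫⁻ t : ℝ, Ff (Function.update y i t)) ^ ((1:ℝ)/((Fintype.card (Fin 3):ℝ) - 1)) :=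
          lintegral_const_mul' _ _ (by
            exact ENNReal.rpow_ne_top_of_nonneg (by norm_num) (by norm_num))
      _ ≤ (2:ℝ≥0∞)^((3:ℝ)/2) * (∫⁻ y : Fin 3 → ℝ, Ff y) ^ ((3:ℝ)/2) := by
          gcongr
  -- compute the integral of Ff
  have hFfint : ∫⁻ y : Fin 3 → ℝ, Ff y = ENNReal.ofReal (1/4 + 4*s) := by
    rw [hFf]
    rw [hmp.lintegral_comp mf.ennreal_ofReal]
    rw [← ofReal_integral_eq_lintegral_ofReal intf (Filter.Eventually.of_forall hfnn), hintf]
  rw [hFfint] at main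
  -- numeric contradiction
  have hq : 2 * (1/4 + 4*s) < 1 := by linarith
  have hq0 : (0:ℝ) ≤ 1/4 + 4*s := by linarith
  have hlt : (2:ℝ≥0∞)^((3:ℝ)/2) * (ENNReal.ofReal (1/4 + 4*s)) ^ ((3:ℝ)/2) < 1 := by
    have h2 : (2:ℝ≥0∞) = ENNReal.ofReal 2 := by simp
    rw [h2, ← ENNReal.mul_rpow_of_nonneg _ _ (by norm_num : (0:ℝ) ≤ 3/2),
      ← ENNReal.ofReal_mul (by norm_num : (0:ℝ) ≤ 2),
      ENNReal.ofReal_rpow_of_nonneg (by linarith) (by norm_num)]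
    rw [show (1:ℝ≥0∞) = ENNReal.ofReal 1 by simp]
    apply ENNReal.ofReal_lt_ofReal_iff_of_nonneg (by positivity) |>.2
    calc (2 * (1/4 + 4*s)) ^ ((3:ℝ)/2) < 1 ^ ((3:ℝ)/2) := by
          apply Real.rpow_lt_rpow (by linarith) hq (by norm_num)
      _ = 1 := Real.one_rpow _
  exact absurd (lt_of_le_of_lt main hlt) (lt_irrefl 1)


-- ## Main theorem auxiliary pieces

lemma SobolevS_lb : 1/16 ≤ SobolevS := by
  have hI6 := int_u₀_pow6_pos
  set I₆ := ∫ x : E3, u₀ x ^ (6:ℕ) with hI₆def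
  set c : ℝ := I₆ ^ (-(1:ℝ)/6) with hcdef
  have hc : 0 < c := Real.rpow_pos_of_pos hI6 _
  have hc6 : c ^ (6:ℕ) = I₆⁻¹ := by
    rw [hcdef, ← Real.rpow_natCast (I₆ ^ (-(1:ℝ)/6)) 6, ← Real.rpow_mul hI6.le]
    norm_num
    rw [show (-1 : ℝ) = -(1:ℝ) by norm_num, Real.rpow_neg hI6.le, Real.rpow_one]
  set w : E3 → ℝ := fun x => c * u₀ x with hwdef
  have hwnorm : (∫ x : E3, |w x| ^ (6:ℕ)) = 1 := by
    have hpt : (fun x : E3 => |w x| ^ (6:ℕ)) = fun x : E3 => c^(6:ℕ) * (u₀ x)^(6:ℕ) := by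
      funext x
      rw [hwdef]
      simp only
      rw [abs_mul, mul_pow, abs_of_pos hc, Even.pow_abs ⟨3, by norm_num⟩]
    rw [hpt, integral_const_mul, hc6, ← hI₆def, inv_mul_cancel₀ hI6.ne']
  have hwgrad : MemLp (grad w) 2 (volume : Measure E3) := by
    rw [hwdef, grad_const_mul u₀ u₀_diff c]
    exact grad_u₀_memℒp.const_smul c
  unfold SobolevS
  apply le_csInf
  · exact ⟨∫ x : E3, ‖grad w x‖ ^ 2,
      ⟨w, u₀_diff.const_mul c, (u₀_memℒp 6).const_mul c, hwgrad, hwnorm, rfl⟩⟩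
  · rintro s ⟨u, h1, h2, h3, h4, rfl⟩
    exact sobolev_lb u h1 h2 h3 h4


set_option maxHeartbeats 2000000 in
theorem statement_5' (a p : ℝ) (ha : 0 < a) (hp : 3 < p) (hp' : p ≤ 4) :
    ∃ lam0 > (0:ℝ), ∀ lam : ℝ, lam0 ≤ lam →
      ca a lam p < (1 / 3) * SobolevS ^ ((3:ℝ) / 2) := by
  classical
  have hp0 : (0:ℝ) < p := by linarith
  set A := ∫ x : E3, ‖grad u₀ x‖ ^ 2 with hAdef
  set B := ∫ x : E3, (u₀ x) ^ 2 with hBdef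
  set C := ∫ x : E3, phiFun u₀ x * (u₀ x) ^ 2 with hCdef
  set Dp := ∫ x : E3, uplus u₀ x ^ p with hDpdef
  set E6 := ∫ x : E3, uplus u₀ x ^ 6 with hE6def
  have hA : 0 ≤ A := integral_nonneg fun x => by positivity
  have hB : 0 ≤ B := integral_nonneg fun x => by positivity
  have hC : 0 ≤ C := integral_nonneg fun x =>
    mul_nonneg (phiFun_nonneg u₀ x) (by positivity)
  have hE6 : 0 ≤ E6 := integral_nonneg fun x => by
    have : (0:ℝ) ≤ uplus u₀ x := le_max_right _ _
    positivity
  have hDp : 0 < Dp := by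
    have : Dp = ∫ x : E3, u₀ x ^ p := by rw [hDpdef, uplus_u₀]
    rw [this]
    exact int_u₀_rpow_pos hp0
  clear_value A B C Dp E6
  set M := (1/2)*A + (a/2)*B + (1/4)*C + 1 with hMdef
  have hM0 : 0 < M := by
    have h : 0 ≤ (a/2)*B := mul_nonneg (by linarith) hB
    rw [hMdef]
    linarith
  clear_value M
  set B₀ : ℝ := 1/768 with hB₀def
  have hB₀pos : (0:ℝ) < B₀ := by rw [hB₀def]; norm_num
  clear_value B₀
  set t₁ := Real.sqrt (B₀ / M) with ht₁def
  have ht₁ : 0 < t₁ := Real.sqrt_pos.2 (by positivity)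
  have ht₁sq : t₁ ^ 2 = B₀ / M := Real.sq_sqrt (by positivity)
  have htp2 : (0:ℝ) < t₁ ^ (2 - p) := Real.rpow_pos_of_pos ht₁ _
  have htp2' : (0:ℝ) < t₁ ^ (p - 2) := Real.rpow_pos_of_pos ht₁ _
  clear_value t₁
  set lam0 := (p * M / Dp) * (1 + t₁ ^ (2 - p)) with hlam0def
  have hlam0pos : 0 < lam0 := by
    rw [hlam0def]
    apply mul_pos (div_pos (mul_pos hp0 hM0) hDp)
    nlinarith
  clear_value lam0
  refine ⟨lam0, hlam0pos, ?_⟩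
  intro lam hlam
  have hlampos : 0 < lam := lt_of_lt_of_le hlam0pos hlam
  have hlam1 : p * M / Dp ≤ lam := by
    have h1 : p * M / Dp ≤ lam0 := by
      rw [hlam0def]
      nlinarith [mul_pos (div_pos (mul_pos hp0 hM0) hDp) htp2, div_pos (mul_pos hp0 hM0) hDp]
    linarith
  have hlam2 : (p * M / Dp) * t₁ ^ (2 - p) ≤ lam := by
    have h1 : (p * M / Dp) * t₁ ^ (2 - p) ≤ lam0 := by
      rw [hlam0def]
      nlinarith [div_pos (mul_pos hp0 hM0) hDp]
    linarith
  -- the path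
  set γ : ℝ → E3 → ℝ := fun t => fun x => t * u₀ x with hγdef
  -- scaling formula
  have hval : ∀ t : ℝ, 0 ≤ t → Ia a lam p (γ t)
      = (1/2) * t^2 * A + (a/2) * t^2 * B + (1/4) * t^4 * C
        - (lam/p) * (t ^ p * Dp) - (1/6) * (t^6 * E6) := by
    intro t ht
    rw [hAdef, hBdef, hCdef, hDpdef, hE6def]
    exact Ia_scale a lam p hp0 u₀ u₀_diff ht
  -- membership in GammaA
  have hγmem : γ ∈ GammaA a lam p := by
    refine ⟨?_, ?_, ?_, ?_⟩
    · -- PathCts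
      intro s _ ε hε
      set R := Real.sqrt (H1normSq u₀) with hR
      have hR0 : 0 ≤ R := Real.sqrt_nonneg _
      refine ⟨ε / (R + 1), by positivity, ?_⟩
      intro t _ hts
      rw [hγdef]
      show H1dist (fun x => t * u₀ x) (fun x => s * u₀ x) < ε
      rw [H1dist_scale u₀ u₀_diff t s, ← hR]
      calc |t - s| * R ≤ |t - s| * (R + 1) := by
            apply mul_le_mul_of_nonneg_left (by linarith) (abs_nonneg _)
        _ < (ε / (R + 1)) * (R + 1) := by
            apply mul_lt_mul_of_pos_right hts (by linarith)
        _ = ε := by field_simp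
    · intro t _
      exact memH1_const_mul u₀ memH1_u₀ t
    · funext x
      show (0:ℝ) * u₀ x = 0
      ring
    · rw [hval 1 zero_le_one, Real.one_rpow]
      have hMle : M ≤ (lam/p) * Dp := by
        have h1 : p * M ≤ lam * Dp := by
          rw [div_le_iff₀ hDp] at hlam1
          nlinarith
        rw [div_mul_eq_mul_div, le_div_iff₀ hp0]
        nlinarith
      nlinarith [hMle, hE6, hMdef]
  -- value bound on the path
  have hvb : ∀ v ∈ (fun t => Ia a lam p (γ t)) '' Icc (0:ℝ) 1, v ≤ B₀ := by
    rintro v ⟨t, ⟨ht0, ht1⟩, rfl⟩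
    show Ia a lam p (γ t) ≤ B₀
    rw [hval t ht0]
    have h42 : t^4 ≤ t^2 := pow_le_pow_of_le_one ht0 ht1 (by norm_num)
    have htp : (0:ℝ) ≤ t ^ p := Real.rpow_nonneg ht0 p
    have ht6 : (0:ℝ) ≤ t^6 * E6 := mul_nonneg (by positivity) hE6
    by_cases hc1 : M * t^2 ≤ B₀
    · have hMt2 : M * t^2 = ((1/2)*A + (a/2)*B + (1/4)*C + 1) * t^2 := by rw [hMdef]
      nlinarith [mul_nonneg (div_nonneg hlampos.le hp0.le) (mul_nonneg htp hDp.le),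
        mul_nonneg (sub_nonneg.2 h42) hC, sq_nonneg t, ht6, hMt2, hc1]
    · push_neg at hc1
      -- t > t₁
      have htt₁ : t₁ < t := by
        by_contra hno
        push_neg at hno
        have h5 : t^2 ≤ t₁^2 := pow_le_pow_left₀ ht0 hno 2
        rw [ht₁sq] at h5
        have h6 : M * t^2 ≤ B₀ := by
          calc M * t^2 ≤ M * (B₀ / M) := mul_le_mul_of_nonneg_left h5 hM0.le
            _ = B₀ := by field_simp
        linarith
      have ht0' : 0 < t := lt_trans ht₁ htt₁
      -- t^p = t^2 * t^(p-2)
      have htpsplit : t ^ p = t^2 * t^(p-2) := by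
        rw [show t^(2:ℕ) = t^((2:ℕ):ℝ) from (Real.rpow_natCast t 2).symm,
          ← Real.rpow_add ht0']
        norm_num
      have htmono : t₁^(p-2) ≤ t^(p-2) :=
        Real.rpow_le_rpow ht₁.le htt₁.le (by linarith)
      -- lam * t₁^(p-2) ≥ p*M/Dp
      have hkey : p * M / Dp ≤ lam * t₁^(p-2) := by
        have h1 : t₁ ^ (2-p) = (t₁^(p-2))⁻¹ := by
          rw [show (2-p : ℝ) = -(p-2) by ring, Real.rpow_neg ht₁.le]
        rw [h1] at hlam2
        calc p * M / Dp = ((p * M / Dp) * (t₁^(p-2))⁻¹) * t₁^(p-2) := by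
              rw [mul_assoc, inv_mul_cancel₀ htp2'.ne', mul_one]
          _ ≤ lam * t₁^(p-2) := by
              apply mul_le_mul_of_nonneg_right hlam2 htp2'.le
      -- conclude M*t^2 ≤ (lam/p)*(t^p*Dp)
      have hfinal : M * t^2 ≤ (lam/p) * (t ^ p * Dp) := by
        rw [htpsplit]
        have h2 : p * M ≤ lam * t₁^(p-2) * Dp := by
          rw [div_le_iff₀ hDp] at hkey
          nlinarith
        have h3 : lam * t₁^(p-2) * Dp ≤ lam * t^(p-2) * Dp := by
          nlinarith [mul_nonneg (mul_nonneg (sub_nonneg.2 htmono) hlampos.le) hDp.le]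
        have h4 : M ≤ (lam/p) * (t^(p-2) * Dp) := by
          rw [div_mul_eq_mul_div, le_div_iff₀ hp0]
          nlinarith
        calc M * t^2 ≤ ((lam/p) * (t^(p-2) * Dp)) * t^2 :=
              mul_le_mul_of_nonneg_right h4 (sq_nonneg t)
          _ = (lam/p) * (t^2 * t^(p-2) * Dp) := by ring
      have hMt2 : M * t^2 = ((1/2)*A + (a/2)*B + (1/4)*C + 1) * t^2 := by rw [hMdef]
      nlinarith [hfinal, mul_nonneg (sub_nonneg.2 h42) hC, sq_nonneg t, ht6, hB₀pos, hMt2]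
  -- ca ≤ B₀
  have hbdd : BddBelow ((fun γ' => sSup ((fun t => Ia a lam p (γ' t)) '' Icc (0:ℝ) 1)) ''
      GammaA a lam p) := by
    refine ⟨0, ?_⟩
    rintro v ⟨γ', hγ', rfl⟩
    apply Real.sSup_nonneg'
    refine ⟨Ia a lam p (γ' 0), ⟨0, ⟨le_refl 0, zero_le_one⟩, rfl⟩, ?_⟩
    rw [hγ'.2.2.1, Ia_zero a lam p (by linarith)]

  have hca : ca a lam p ≤ B₀ := by
    have h1 : ca a lam p ≤ sSup ((fun t => Ia a lam p (γ t)) '' Icc (0:ℝ) 1) :=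
      csInf_le hbdd ⟨γ, hγmem, rfl⟩
    have h2 : sSup ((fun t => Ia a lam p (γ t)) '' Icc (0:ℝ) 1) ≤ B₀ :=
      Real.sSup_le hvb (by rw [hB₀def]; norm_num)
    linarith
  -- RHS lower bound
  have hS := SobolevS_lb
  have h1416 : ((1:ℝ)/16) ^ ((3:ℝ)/2) = 1/64 := by
    rw [show ((1:ℝ)/16) = ((1:ℝ)/4)^(2:ℕ) by norm_num, ← Real.rpow_natCast ((1:ℝ)/4) 2,
      ← Real.rpow_mul (by norm_num)]
    rw [show ((2:ℕ):ℝ) * ((3:ℝ)/2) = ((3:ℕ):ℝ) by norm_num, Real.rpow_natCast]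
    norm_num
  have hmono : ((1:ℝ)/16) ^ ((3:ℝ)/2) ≤ SobolevS ^ ((3:ℝ)/2) :=
    Real.rpow_le_rpow (by norm_num) hS (by norm_num)
  rw [h1416] at hmono
  rw [hB₀def] at hca
  linarith


/-- for `λ > 0` sufficiently large, `c_a < (1/3) S^{3/2}`. -/
theorem statement_5 (a p : ℝ) (ha : 0 < a) (hp : 3 < p) (hp' : p ≤ 4) :
    ∃ lam0 > (0:ℝ), ∀ lam : ℝ, lam0 ≤ lam →
      ca a lam p < (1 / 3) * SobolevS ^ ((3:ℝ) / 2) := by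
  exact statement_5' a p ha hp hp'
end
end

section
/- Every sequence {u_n} in H¹(ℝ³) satisfying I_a(u_n) → c_a, I_a′(u_n) → 0 and G_a(u_n) → 0 as n → ∞ is bounded in H¹(ℝ³). -/
noncomputable section

open MeasureTheory Real Set Filter Topology Metric

/-- every sequence with `I_a(u_n) → c_a`, `I_a′(u_n) → 0`, `G_a(u_n) → 0`
is bounded in `H¹(ℝ³)`. -/
theorem statement_6 (a lam p : ℝ) (ha : 0 < a) (hlam : 0 < lam)
    (hp : 3 < p) (hp' : p ≤ 4)
    (u : ℕ → E3 → ℝ) (hmem : ∀ n, MemH1 (u n))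
    (hI : Tendsto (fun n => Ia a lam p (u n)) atTop (𝓝 (ca a lam p)))
    (hI' : DerivTendstoZero a lam p u)
    (hG : Tendsto (fun n => Ga a lam p (u n)) atTop (𝓝 0)) :
    ∃ C : ℝ, ∀ n, H1norm (u n) ≤ C := by
  set m : ℝ := min (p - 3) (a * (p - 2)) with hm
  have hm0 : 0 < m := lt_min (by linarith) (by nlinarith)
  -- the combination sequence
  have ht : Tendsto (fun n => (2 * p - 3) * Ia a lam p (u n) - Ga a lam p (u n))
      atTop (𝓝 ((2 * p - 3) * ca a lam p - 0)) := (hI.const_mul _).sub hG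
  obtain ⟨M, hM⟩ := ht.bddAbove_range
  have hMle : ∀ n, (2 * p - 3) * Ia a lam p (u n) - Ga a lam p (u n) ≤ M := fun n =>
    hM (Set.mem_range_self n)
  refine ⟨Real.sqrt (M / m), fun n => ?_⟩
  have key : H1normSq (u n) ≤ M / m := by
    set A := ∫ x : E3, ‖grad (u n) x‖ ^ 2 with hA
    set B := ∫ x : E3, (u n x) ^ 2 with hB
    set P := ∫ x : E3, phiFun (u n) x * (u n x) ^ 2 with hP
    set Q := ∫ x : E3, uplus (u n) x ^ p with hQ
    set R := ∫ x : E3, uplus (u n) x ^ 6 with hR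
    have hA0 : 0 ≤ A := integral_nonneg fun x => by positivity
    have hB0 : 0 ≤ B := integral_nonneg fun x => by positivity
    have hP0 : 0 ≤ P := by
      refine integral_nonneg fun x => mul_nonneg ?_ (by positivity)
      unfold phiFun
      refine mul_nonneg (by positivity) (integral_nonneg fun y => by positivity)
    have hQ0 : 0 ≤ Q := integral_nonneg fun x => by
      have : (0:ℝ) ≤ uplus (u n) x := le_max_right _ _
      positivity
    have hR0 : 0 ≤ R := integral_nonneg fun x => by
      have : (0:ℝ) ≤ uplus (u n) x := le_max_right _ _
      positivity
    have hp0 : p ≠ 0 := by positivity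
    have hiden : (2 * p - 3) * Ia a lam p (u n) - Ga a lam p (u n)
        = (p - 3) * A + a * (p - 2) * B + ((p - 3) / 2) * P + ((12 - 2 * p) / 6) * R := by
      unfold Ia Ga
      rw [← hA, ← hB, ← hP, ← hQ, ← hR]
      field_simp
      ring
    have h1 : m * H1normSq (u n) ≤ (2 * p - 3) * Ia a lam p (u n) - Ga a lam p (u n) := by
      rw [hiden]
      unfold H1normSq
      rw [← hA, ← hB]
      have h2 : m ≤ p - 3 := min_le_left _ _
      have h3 : m ≤ a * (p - 2) := min_le_right _ _
      nlinarith [mul_le_mul_of_nonneg_right h2 hA0, mul_le_mul_of_nonneg_right h3 hB0,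
        mul_nonneg (by linarith : (0:ℝ) ≤ (p-3)/2) hP0,
        mul_nonneg (by linarith : (0:ℝ) ≤ (12 - 2*p)/6) hR0]
    calc H1normSq (u n) = m * H1normSq (u n) / m := by field_simp
      _ ≤ ((2 * p - 3) * Ia a lam p (u n) - Ga a lam p (u n)) / m :=
          div_le_div_of_nonneg_right h1 hm0.le |>.trans_eq rfl
      _ ≤ M / m := div_le_div_of_nonneg_right (hMle n) hm0.le |>.trans_eq rfl
  exact Real.sqrt_le_sqrt key
end
end
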